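/- If a countable graph G does not lie in the Schmidt closure of the class 𝒲, then it contains a comb with all teeth in V*(G). Concretely: one can recursively choose components C₀ ⊇ C₁ ⊇ …, vertices vᵢ ∈ V*(G) ∩ Cᵢ, and paths Pᵢ whose union is a comb with teeth v₀, v₁, …. -/

import Mathlib

open Cardinal

/-- The set of vertices of infinite degree in `G`. -/
def Vinf {V : Type*} (G : SimpleGraph V) : Set V := {v : V | (G.neighborSet v).Infinite}

/-- The set of vertices of infinite degree having only finitely many neighbours of infinite
degree. -/
def Vstar {V : Type*} (G : SimpleGraph V) : Set V :=
  {v : V | (G.neighborSet v).Infinite ∧ (G.neighborSet v ∩ Vinf G).Finite}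

/-- `G` contains a comb with all teeth in `A`: a ray `r` together with infinitely many pairwise
disjoint finite paths, the `n`-th path going from the vertex `r (k n)` of the ray to a tooth
`t n ∈ A`, each path meeting the ray exactly in its first vertex. -/
def HasCombWithTeethIn {V : Type*} (G : SimpleGraph V) (A : Set V) : Prop :=
  ∃ (r : ℕ → V) (k : ℕ → ℕ) (t : ℕ → V) (p : ∀ n : ℕ, G.Walk (r (k n)) (t n)),
    Function.Injective r ∧ (∀ n : ℕ, G.Adj (r n) (r (n + 1))) ∧
    StrictMono k ∧ (∀ n : ℕ, t n ∈ A) ∧ (∀ n : ℕ, (p n).IsPath) ∧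
    (∀ m n : ℕ, m ≠ n → ∀ v : V, v ∈ (p m).support → v ∉ (p n).support) ∧
    (∀ n : ℕ, ∀ v ∈ (p n).support, (∃ i : ℕ, v = r i) → v = r (k n))

universe u

/-- A class of graphs: a predicate on simple graphs over arbitrary vertex types in universe `u`. -/
def GraphClass : Type (u + 1) := ∀ (V : Type u), SimpleGraph V → Prop

/-- The component graph: the subgraph of `G` induced by a connected component `C` of `G - S`. -/
def CompGraph {V : Type u} (G : SimpleGraph V) (S : Set V)
    (C : (G.induce Sᶜ).ConnectedComponent) : SimpleGraph C.supp :=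
  (G.induce Sᶜ).induce C.supp

/-- The Schmidt hierarchy: `SchmidtLevel 𝒰 0 = 𝒰`, and for `μ > 0` a graph `G` lies in
`SchmidtLevel 𝒰 μ` iff there is a finite vertex set `S` such that every component of `G - S`
lies in `SchmidtLevel 𝒰 lam` for some `lam < μ`. -/
noncomputable def SchmidtLevel (𝒰 : GraphClass.{u}) (μ : Ordinal.{u}) : GraphClass.{u} :=
  fun V G =>
    if μ = 0 then 𝒰 V G
    else ∃ S : Set V, S.Finite ∧
      ∀ C : (G.induce Sᶜ).ConnectedComponent,
        ∃ lam : Ordinal.{u}, ∃ _ : lam < μ, SchmidtLevel 𝒰 lam C.supp (CompGraph G S C)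
  termination_by μ
  decreasing_by exact ‹_›

/-- A graph belongs to the Schmidt closure of `𝒰` if it lies in some level of the hierarchy. -/
def InSchmidtClosure (𝒰 : GraphClass.{u}) {V : Type u} (G : SimpleGraph V) : Prop :=
  ∃ μ : Ordinal.{u}, SchmidtLevel 𝒰 μ V G

/-- The rank of a graph in the Schmidt closure: the least level containing it. -/
noncomputable def SchmidtRank (𝒰 : GraphClass.{u}) {V : Type u} (G : SimpleGraph V) :
    Ordinal.{u} :=
  sInf {μ : Ordinal.{u} | SchmidtLevel 𝒰 μ V G}

/-- The class 𝒲 of countable graphs `G` with `Vstar G` finite. -/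
def Wclass : GraphClass.{u} := fun V G => Countable V ∧ (Vstar G).Finite

section IsoInv
variable {V W : Type u} {G : SimpleGraph V} {H : SimpleGraph W}

lemma iso_neighborSet_image (e : G ≃g H) (v : V) :
    e '' G.neighborSet v = H.neighborSet (e v) := by
  ext w
  constructor
  · rintro ⟨u, hu, rfl⟩; exact e.map_adj_iff.mpr hu
  · intro hw
    refine ⟨e.symm w, ?_, e.apply_symm_apply w⟩
    have : H.Adj (e v) (e (e.symm w)) := by rwa [e.apply_symm_apply]
    exact e.map_adj_iff.mp this

lemma iso_vinf_image (e : G ≃g H) : e '' Vinf G = Vinf H := by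
  ext w
  constructor
  · rintro ⟨u, hu, rfl⟩
    have := (Set.infinite_image_iff e.injective.injOn).mpr hu
    rwa [iso_neighborSet_image e u] at this
  · intro hw
    refine ⟨e.symm w, ?_, e.apply_symm_apply w⟩
    have : (H.neighborSet (e (e.symm w))).Infinite := by rwa [e.apply_symm_apply]
    rw [← iso_neighborSet_image e (e.symm w)] at this
    exact Set.Infinite.of_image _ this

lemma iso_vstar_image (e : G ≃g H) : e '' Vstar G = Vstar H := by
  ext w
  constructor
  · rintro ⟨u, ⟨h1, h2⟩, rfl⟩
    constructor
    · have := (Set.infinite_image_iff e.injective.injOn).mpr h1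
      rwa [iso_neighborSet_image e u] at this
    · have : H.neighborSet (e u) ∩ Vinf H = e '' (G.neighborSet u ∩ Vinf G) := by
        rw [Set.image_inter e.injective, iso_neighborSet_image, iso_vinf_image]
      rw [this]
      exact h2.image _
  · intro ⟨h1, h2⟩
    refine ⟨e.symm w, ⟨?_, ?_⟩, e.apply_symm_apply w⟩
    · have : (H.neighborSet (e (e.symm w))).Infinite := by rwa [e.apply_symm_apply]
      rw [← iso_neighborSet_image e (e.symm w)] at this
      exact Set.Infinite.of_image _ this
    · have : e '' (G.neighborSet (e.symm w) ∩ Vinf G) = H.neighborSet w ∩ Vinf H := by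
        rw [Set.image_inter e.injective, iso_neighborSet_image, iso_vinf_image,
          e.apply_symm_apply]
      have h3 := h2
      rw [← this] at h3
      exact (Set.Finite.of_finite_image h3 (e.injective.injOn))

lemma wclass_iso (e : G ≃g H) (h : Wclass V G) : Wclass W H := by
  obtain ⟨h1, h2⟩ := h
  refine ⟨e.toEquiv.countable_iff.mp h1, ?_⟩
  · rw [← iso_vstar_image e]; exact h2.image _

end IsoInv

section LevelIso
variable {V W : Type u} {G : SimpleGraph V} {H : SimpleGraph W}

/-- Restriction of an isomorphism to the complement of a set and its image. -/
def isoInduceCompl (e : G ≃g H) (S : Set V) : G.induce Sᶜ ≃g H.induce (e '' S)ᶜ where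
  toEquiv := e.toEquiv.subtypeEquiv (fun v => by
    simp only [Set.mem_compl_iff, not_iff_not]
    exact ⟨fun h => ⟨v, h, rfl⟩, fun ⟨u, hu, huv⟩ => (e.injective huv) ▸ hu⟩)
  map_rel_iff' := by
    intro a b
    simp [SimpleGraph.comap_adj, e.map_adj_iff]

/-- Restriction of an isomorphism to a connected component. -/
def compIso {α β : Type u} {A : SimpleGraph α} {B : SimpleGraph β} (e' : A ≃g B)
    (C : A.ConnectedComponent) :
    A.induce C.supp ≃g B.induce (e'.connectedComponentEquiv C).supp where
  toEquiv := SimpleGraph.ConnectedComponent.isoEquivSupp e' C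
  map_rel_iff' := by
    intro a b
    simp [SimpleGraph.comap_adj, SimpleGraph.ConnectedComponent.isoEquivSupp, e'.map_adj_iff]

theorem schmidtLevel_iso : ∀ μ : Ordinal.{u}, ∀ {V W : Type u} {G : SimpleGraph V}
    {H : SimpleGraph W} (_ : G ≃g H), SchmidtLevel Wclass μ V G → SchmidtLevel Wclass μ W H := by
  intro μ
  induction μ using Ordinal.induction with
  | h μ IH =>
    intro V W G H e hG
    rw [SchmidtLevel] at hG ⊢
    by_cases h0 : μ = 0
    · rw [if_pos h0] at hG ⊢
      exact wclass_iso e hG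
    · rw [if_neg h0] at hG ⊢
      obtain ⟨S, hSfin, hS⟩ := hG
      refine ⟨e '' S, hSfin.image _, ?_⟩
      intro C'
      obtain ⟨C, rfl⟩ := (isoInduceCompl e S).connectedComponentEquiv.surjective C'
      obtain ⟨lam, hlt, hlev⟩ := hS C
      exact ⟨lam, hlt, IH lam hlt (compIso (isoInduceCompl e S) C) hlev⟩

theorem closure_iso (e : G ≃g H) (h : InSchmidtClosure Wclass G) : InSchmidtClosure Wclass H := by
  obtain ⟨μ, hμ⟩ := h
  exact ⟨μ, schmidtLevel_iso μ e hμ⟩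

end LevelIso

section BadStep
variable {V : Type u} {G : SimpleGraph V}

/-- If `G` is not in the closure, then for every finite `S` some component of `G - S`
is not in the closure. -/
theorem bad_step (hG : ¬ InSchmidtClosure Wclass G) (S : Set V) (hS : S.Finite) :
    ∃ C : (G.induce Sᶜ).ConnectedComponent, ¬ InSchmidtClosure Wclass (CompGraph G S C) := by
  by_contra hcon
  push_neg at hcon
  choose f hf using hcon
  apply hG
  refine ⟨Ordinal.lsub f + 1, ?_⟩
  rw [SchmidtLevel, if_neg (by exact (Order.succ_ne_bot (Ordinal.lsub f)))]
  exact ⟨S, hS, fun C => ⟨f C, lt_trans (Ordinal.lt_lsub f C) (lt_add_one _), hf C⟩⟩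

theorem bad_vstar_infinite [Countable V] (hG : ¬ InSchmidtClosure Wclass G) :
    (Vstar G).Infinite := by
  by_contra hfin
  rw [Set.not_infinite] at hfin
  exact hG ⟨0, by rw [SchmidtLevel, if_pos rfl]; exact ⟨inferInstance, hfin⟩⟩

/-- A comap along an injective function is isomorphic to the induced graph on the range. -/
noncomputable def comapRangeIso {α : Type u} (G : SimpleGraph V) (f : α → V) (hf : Function.Injective f) :
    G.comap f ≃g G.induce (Set.range f) where
  toEquiv := Equiv.ofInjective f hf
  map_rel_iff' := Iff.rfl

end BadStep

section Flat
variable {V : Type u} {G : SimpleGraph V}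

theorem flat_step (X : Set V) (hbad : ¬ InSchmidtClosure Wclass (G.induce X))
    (s : Set V) (hs : s.Finite) :
    ∃ Y : Set V, Y ⊆ X ∧ (∀ y ∈ Y, y ∉ s) ∧ Y.Nonempty ∧
      ¬ InSchmidtClosure Wclass (G.induce Y) ∧
      (∀ v ∈ Y, ∀ w ∈ X, w ∉ s → G.Adj v w → w ∈ Y) ∧
      (∀ a, a ∈ Y → ∀ b, b ∈ Y → ∃ p : G.Walk a b, ∀ z ∈ p.support, z ∈ Y) := by
  classical
  set S : Set (↥X) := Subtype.val ⁻¹' s with hSdef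
  have hSfin : S.Finite := hs.preimage (Subtype.val_injective.injOn)
  obtain ⟨C, hC⟩ := bad_step hbad S hSfin
  set ι : ↥C.supp → V := fun a => a.1.1.1 with hιdef
  have hι : Function.Injective ι := fun a b h =>
    Subtype.ext (Subtype.ext (Subtype.ext h))
  refine ⟨Set.range ι, ?_, ?_, ?_, ?_, ?_, ?_⟩
  · rintro v ⟨a, rfl⟩
    exact a.1.1.2
  · rintro v ⟨a, rfl⟩
    exact a.1.2
  · obtain ⟨w, hw⟩ := C.exists_rep
    exact ⟨ι ⟨w, by rw [SimpleGraph.ConnectedComponent.mem_supp_iff]; exact hw⟩,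
      Set.mem_range_self _⟩
  · intro hcl
    exact hC (closure_iso (comapRangeIso G ι hι).symm hcl)
  · rintro v ⟨a, rfl⟩ w hw hws hadj
    have hw2 : (⟨w, hw⟩ : ↥X) ∈ Sᶜ := by
      simp only [hSdef, Set.mem_compl_iff, Set.mem_preimage]
      exact hws
    have hadj' : ((G.induce X).induce Sᶜ).Adj a.1 ⟨⟨w, hw⟩, hw2⟩ := hadj
    have hmk : ((G.induce X).induce Sᶜ).connectedComponentMk ⟨⟨w, hw⟩, hw2⟩ = C := by
      rw [← SimpleGraph.ConnectedComponent.connectedComponentMk_eq_of_adj hadj']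
      exact a.2
    exact ⟨⟨⟨⟨w, hw⟩, hw2⟩, hmk⟩, rfl⟩
  · rintro a ⟨a', rfl⟩ b ⟨b', rfl⟩
    have hreach : ((G.induce X).induce Sᶜ).Reachable a'.1 b'.1 :=
      SimpleGraph.ConnectedComponent.exact (a'.2.trans b'.2.symm)
    obtain ⟨p0⟩ := hreach
    set f2 : ↥(Sᶜ) → V := fun b => b.1.1 with hf2def
    have hhom : ((G.induce X).induce Sᶜ) →g G := SimpleGraph.Hom.comap f2 G
    refine ⟨p0.map (SimpleGraph.Hom.comap f2 G), ?_⟩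
    intro z hz
    erw [SimpleGraph.Walk.support_map, List.mem_map] at hz
    obtain ⟨u, hu, rfl⟩ := hz
    have hmk : ((G.induce X).induce Sᶜ).connectedComponentMk u = C := by
      have : ((G.induce X).induce Sᶜ).Reachable a'.1 u := ⟨p0.takeUntil u hu⟩
      rw [← SimpleGraph.ConnectedComponent.sound this]
      exact a'.2
    exact ⟨⟨u, hmk⟩, rfl⟩

end Flat

section Helpers
variable {V : Type u} {G : SimpleGraph V}

lemma induce_neighborSet_image (X : Set V) (a : ↥X) :
    Subtype.val '' ((G.induce X).neighborSet a) = G.neighborSet a.1 ∩ X := by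
  ext w
  simp only [Set.mem_image, SimpleGraph.mem_neighborSet, SimpleGraph.comap_adj,
    Set.mem_inter_iff]
  constructor
  · rintro ⟨b, hb, rfl⟩
    exact ⟨hb, b.2⟩
  · rintro ⟨h1, h2⟩
    exact ⟨⟨w, h2⟩, h1, rfl⟩

lemma vstar_lift (X : Set V) (hAF : ∀ v ∈ X, (G.neighborSet v \ X).Finite)
    (a : ↥X) (ha : a ∈ Vstar (G.induce X)) : a.1 ∈ Vstar G := by
  obtain ⟨h1, h2⟩ := ha
  have himg : (G.neighborSet a.1 ∩ X).Infinite := by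
    rw [← induce_neighborSet_image X a]
    exact h1.image (Subtype.val_injective.injOn)
  constructor
  · exact himg.mono Set.inter_subset_left
  · have hsub : G.neighborSet a.1 ∩ Vinf G ⊆
        (G.neighborSet a.1 \ X) ∪
          Subtype.val '' ((G.induce X).neighborSet a ∩ Vinf (G.induce X)) := by
      rintro w ⟨hw1, hw2⟩
      by_cases hwX : w ∈ X
      · right
        refine ⟨⟨w, hwX⟩, ⟨hw1, ?_⟩, rfl⟩
        -- w has infinite degree in the induced graph
        have : (G.neighborSet w ∩ X).Infinite := by
          have := hAF w hwX
          have hdiff := hw2.diff this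
          exact hdiff.mono (by intro z hz; exact ⟨hz.1, by_contra fun h => hz.2 ⟨hz.1, h⟩⟩)
        rw [← induce_neighborSet_image X ⟨w, hwX⟩] at this
        exact Set.Infinite.of_image _ this
      · left; exact ⟨hw1, hwX⟩
    exact ((hAF a.1 a.2).union (h2.image _)).subset hsub

lemma bad_vstar_inter [Countable V] (X : Set V)
    (hbad : ¬ InSchmidtClosure Wclass (G.induce X))
    (hAF : ∀ v ∈ X, (G.neighborSet v \ X).Finite) : (Vstar G ∩ X).Infinite := by
  have h1 : (Vstar (G.induce X)).Infinite := bad_vstar_infinite hbad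
  have h2 : (Subtype.val '' Vstar (G.induce X)).Infinite :=
    h1.image (Subtype.val_injective.injOn)
  refine h2.mono ?_
  rintro w ⟨a, ha, rfl⟩
  exact ⟨vstar_lift X hAF a ha, a.2⟩

lemma IsPath.getVert_injOn' {u v : V} {p : G.Walk u v} (hp : p.IsPath) :
    ∀ i, i ≤ p.length → ∀ j, j ≤ p.length → p.getVert i = p.getVert j → i = j := by
  induction p with
  | nil => intro i hi j hj _; simp at hi hj; omega
  | cons h q ih =>
    rw [SimpleGraph.Walk.cons_isPath_iff] at hp
    intro i hi j hj hij
    match i, j with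
    | 0, 0 => rfl
    | 0, (j+1) =>
      exfalso
      apply hp.2
      rw [SimpleGraph.Walk.mem_support_iff_exists_getVert]
      refine ⟨j, ?_, by simpa using hj⟩
      simpa using hij.symm
    | (i+1), 0 =>
      exfalso
      apply hp.2
      rw [SimpleGraph.Walk.mem_support_iff_exists_getVert]
      refine ⟨i, ?_, by simpa using hi⟩
      simpa using hij
    | (i+1), (j+1) =>
      have := ih hp.1 i (by simpa using hi) j (by simpa using hj) (by simpa using hij)
      omega

lemma exists_boundary {Y : Set V} : ∀ {a b : V} (p : G.Walk a b), a ∈ Y → b ∉ Y →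
    ∃ c d, G.Adj c d ∧ c ∈ Y ∧ d ∉ Y ∧ d ∈ p.support := by
  intro a b p
  induction p with
  | nil => intro h1 h2; exact absurd h1 h2
  | @cons a m b h q ih =>
    intro h1 h2
    by_cases hm : m ∈ Y
    · obtain ⟨c, d, h3, h4, h5, h6⟩ := ih hm h2
      refine ⟨c, d, h3, h4, h5, ?_⟩
      rw [SimpleGraph.Walk.support_cons]
      exact List.mem_cons_of_mem _ h6
    · refine ⟨a, m, h, h1, hm, ?_⟩
      rw [SimpleGraph.Walk.support_cons]
      exact List.mem_cons_of_mem _ q.start_mem_support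

lemma isPath_concat {u v w : V} {p : G.Walk u v} (hp : p.IsPath) (h : G.Adj v w)
    (hw : w ∉ p.support) : (p.concat h).IsPath := by
  rw [SimpleGraph.Walk.isPath_def, SimpleGraph.Walk.support_concat]
  rw [List.nodup_append']
  refine ⟨hp.support_nodup, List.nodup_singleton w, ?_⟩
  intro z hz hz'
  rw [List.mem_singleton] at hz'
  subst hz'
  exact hw hz

lemma takeUntil_inter [DecidableEq V] {u v : V} {p : G.Walk u v} (hp : p.IsPath) (d : V) (hd : d ∈ p.support) :
    ∀ z ∈ (p.takeUntil d hd).support, z ∈ (p.dropUntil d hd).support → z = d := by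
  intro z hz hz'
  have hspec := SimpleGraph.Walk.take_spec p hd
  have hnodup : ((p.takeUntil d hd).support ++ (p.dropUntil d hd).support.tail).Nodup := by
    rw [← SimpleGraph.Walk.support_append, hspec]
    exact hp.support_nodup
  rw [SimpleGraph.Walk.support_eq_cons (p.dropUntil d hd), List.mem_cons] at hz'
  rcases hz' with hz' | hz'
  · exact hz'
  · exact absurd hz ((List.disjoint_of_nodup_append hnodup |>.symm) hz')

end Helpers

section Main
variable {V : Type u}

structure St (G : SimpleGraph V) where
  X : Set V
  x : V
  hx : x ∈ X
  bad : ¬ InSchmidtClosure Wclass (G.induce X)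
  af : ∀ v ∈ X, (G.neighborSet v \ X).Finite
  conn : ∀ a ∈ X, ∀ b ∈ X, ∃ p : G.Walk a b, ∀ z ∈ p.support, z ∈ X

structure StepData (G : SimpleGraph V) (σ : St G) where
  τ : St G
  v : V
  W : G.Walk σ.x τ.x
  i : ℕ
  q : G.Walk (W.getVert i) v
  hsub : τ.X ⊆ σ.X
  hv : v ∈ Vstar G
  hWp : W.IsPath
  hi : i < W.length
  hWX : ∀ z ∈ W.support, z ∈ σ.X
  hWY : ∀ z ∈ W.support, z ∈ τ.X → z = τ.x
  hq : q.IsPath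
  hqder : ∀ z ∈ q.support, z ∈ σ.X ∧ z ∉ τ.X
  hqW : ∀ z ∈ q.support, z ∈ W.support → z = W.getVert i

lemma mem_concat' {α : Type*} {a b : α} {l : List α} : a ∈ l.concat b ↔ a ∈ l ∨ a = b := by
  simp [List.concat_eq_append]

lemma step_exists [Countable V] (G : SimpleGraph V) (σ : St G) : Nonempty (StepData G σ) := by
  classical
  have hVs : (Vstar G ∩ σ.X).Infinite := bad_vstar_inter σ.X σ.bad σ.af
  obtain ⟨v, hv⟩ := (hVs.diff (Set.finite_singleton σ.x)).nonempty
  obtain ⟨⟨hvV, hvX⟩, hvne⟩ := hv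
  obtain ⟨R0, hR0⟩ := σ.conn σ.x σ.hx v hvX
  set R := R0.bypass with hRdef
  have hRp : R.IsPath := R0.bypass_isPath
  have hRX : ∀ z ∈ R.support, z ∈ σ.X := fun z hz => hR0 z (R0.support_bypass_subset hz)
  set sset : Set V := {z | z ∈ R.support} ∪ (G.neighborSet v ∩ Vinf G) with hssetdef
  have hsfin : sset.Finite := (R.support.finite_toSet).union hvV.2
  obtain ⟨Y, hY1, hY2, hY3, hY4, hY5, hY6⟩ := flat_step σ.X σ.bad sset hsfin
  have hafY : ∀ w ∈ Y, (G.neighborSet w \ Y).Finite := by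
    intro w hw
    have hsub : G.neighborSet w \ Y ⊆ (G.neighborSet w \ σ.X) ∪ sset := by
      intro z hz
      by_cases hzX : z ∈ σ.X
      · by_cases hzs : z ∈ sset
        · exact Or.inr hzs
        · exact absurd (hY5 w hw z hzX hzs hz.1) hz.2
      · exact Or.inl ⟨hz.1, hzX⟩
    exact ((σ.af w (hY1 hw)).union hsfin).subset hsub
  have hxs : σ.x ∈ sset := Or.inl R.start_mem_support
  have hvs : v ∈ sset := Or.inl R.end_mem_support
  obtain ⟨y0, hy0⟩ := hY3
  obtain ⟨Q0, hQ0⟩ := σ.conn y0 (hY1 hy0) σ.x σ.hx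
  have hxnY : σ.x ∉ Y := fun h => hY2 _ h hxs
  obtain ⟨c, d, hcd, hcY, hdY, hdQ⟩ := exists_boundary Q0 hy0 hxnY
  have hdX : d ∈ σ.X := hQ0 d hdQ
  have hds : d ∈ sset := by
    by_contra h
    exact hdY (hY5 c hcY d hdX h hcd)
  set τ : St G := ⟨Y, c, hcY, hY4, hafY, fun a ha b hb => hY6 a ha b hb⟩ with hτdef
  have hedge : G.Adj d c := hcd.symm
  have hYss : ∀ z, z ∈ Y → z ∉ sset := hY2
  by_cases hdR : d ∈ R.support
  · -- Case A: d lies on the path R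
    set T := R.takeUntil d hdR with hTdef
    have hTsub : ∀ z ∈ T.support, z ∈ R.support := fun z hz =>
      R.support_takeUntil_subset hdR hz
    have hTp : T.IsPath := hRp.takeUntil hdR
    have hcT : c ∉ T.support := fun h => hYss c hcY (Or.inl (hTsub c h))
    have hgv : (T.concat hedge).getVert T.length = d := by
      rw [SimpleGraph.Walk.concat_eq_append, SimpleGraph.Walk.getVert_append]
      simp
    refine ⟨⟨τ, v, T.concat hedge, T.length, (R.dropUntil d hdR).copy hgv.symm rfl,
      hY1, hvV, isPath_concat hTp hedge hcT, ?_, ?_, ?_, ?_, ?_, ?_⟩⟩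
    · rw [SimpleGraph.Walk.length_concat]; omega
    · intro z hz
      rw [SimpleGraph.Walk.support_concat, List.mem_append, List.mem_singleton] at hz
      rcases hz with hz | hz
      · exact hRX z (hTsub z hz)
      · exact hz ▸ hY1 hcY
    · intro z hz hzY
      rw [SimpleGraph.Walk.support_concat, List.mem_append, List.mem_singleton] at hz
      rcases hz with hz | hz
      · exact absurd (Or.inl (hTsub z hz)) (hYss z hzY)
      · exact hz
    · rw [SimpleGraph.Walk.isPath_copy]
      exact hRp.dropUntil hdR
    · intro z hz
      rw [SimpleGraph.Walk.support_copy] at hz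
      have hzR : z ∈ R.support := R.support_dropUntil_subset hdR hz
      exact ⟨hRX z hzR, fun h => hYss z h (Or.inl hzR)⟩
    · intro z hz hzW
      rw [SimpleGraph.Walk.support_copy] at hz
      rw [SimpleGraph.Walk.support_concat, List.mem_append, List.mem_singleton] at hzW
      rcases hzW with hzW | hzW
      · rw [hgv]
        exact takeUntil_inter hRp d hdR z hzW hz
      · exfalso
        have hzc : z = c := hzW
        rw [hzc] at hz
        exact hYss c hcY (Or.inl (R.support_dropUntil_subset hdR hz))
  · -- Case B: d is a neighbour of v of infinite degree
    have hdNv : d ∈ G.neighborSet v ∩ Vinf G := hds.resolve_left hdR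
    have hvd : G.Adj v d := hdNv.1
    set T1 := R.concat hvd with hT1def
    have hT1p : T1.IsPath := isPath_concat hRp hvd hdR
    have hcT1 : c ∉ T1.support := by
      rw [SimpleGraph.Walk.support_concat, List.mem_append, List.mem_singleton]
      rintro (h | h)
      · exact hYss c hcY (Or.inl h)
      · exact hdY (h ▸ hcY)
    have hgv : (T1.concat hedge).getVert R.length = v := by
      rw [SimpleGraph.Walk.concat_eq_append, SimpleGraph.Walk.getVert_append]
      rw [if_pos (by rw [hT1def, SimpleGraph.Walk.length_concat]; omega)]
      rw [hT1def, SimpleGraph.Walk.concat_eq_append, SimpleGraph.Walk.getVert_append]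
      simp
    refine ⟨⟨τ, v, T1.concat hedge, R.length, ((SimpleGraph.Walk.nil : G.Walk v v)).copy hgv.symm rfl,
      hY1, hvV, isPath_concat hT1p hedge hcT1, ?_, ?_, ?_, ?_, ?_, ?_⟩⟩
    · rw [SimpleGraph.Walk.length_concat, hT1def, SimpleGraph.Walk.length_concat]; omega
    · intro z hz
      rw [SimpleGraph.Walk.support_concat, List.mem_append, List.mem_singleton] at hz
      rcases hz with hz | hz
      · rw [hT1def, SimpleGraph.Walk.support_concat, List.mem_append, List.mem_singleton] at hz
        rcases hz with hz | hz
        · exact hRX z hz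
        · exact hz ▸ hdX
      · exact hz ▸ hY1 hcY
    · intro z hz hzY
      rw [SimpleGraph.Walk.support_concat, List.mem_append, List.mem_singleton] at hz
      rcases hz with hz | hz
      · rw [hT1def, SimpleGraph.Walk.support_concat, List.mem_append, List.mem_singleton] at hz
        rcases hz with hz | hz
        · exact absurd (Or.inl hz) (hYss z hzY)
        · exact absurd (hz ▸ hzY) hdY
      · exact hz
    · rw [SimpleGraph.Walk.isPath_copy]
      exact SimpleGraph.Walk.IsPath.nil
    · intro z hz
      rw [SimpleGraph.Walk.support_copy, SimpleGraph.Walk.support_nil, List.mem_singleton] at hz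
      rw [hz]
      exact ⟨hvX, fun h => hYss v h hvs⟩
    · intro z hz _
      rw [SimpleGraph.Walk.support_copy, SimpleGraph.Walk.support_nil, List.mem_singleton] at hz
      rw [hz, hgv]

end Main

section Seq
variable {V : Type u}

lemma init_exists [Countable V] (G : SimpleGraph V) (hG : ¬ InSchmidtClosure Wclass G) :
    Nonempty (St G) := by
  classical
  have hbadU : ¬ InSchmidtClosure Wclass (G.induce (Set.univ : Set V)) := fun h =>
    hG (closure_iso (SimpleGraph.induceUnivIso G) h)
  obtain ⟨Y, hY1, hY2, hY3, hY4, hY5, hY6⟩ := flat_step Set.univ hbadU ∅ Set.finite_empty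
  obtain ⟨x0, hx0⟩ := hY3
  have hafY : ∀ w ∈ Y, (G.neighborSet w \ Y).Finite := by
    intro w hw
    have : G.neighborSet w \ Y = ∅ := by
      ext z
      simp only [Set.mem_diff, Set.mem_empty_iff_false, iff_false, not_and]
      intro hz hzy
      exact hzy (hY5 w hw z (Set.mem_univ z) (Set.notMem_empty z) hz)
    rw [this]
    exact Set.finite_empty
  exact ⟨⟨Y, x0, hx0, hY4, hafY, hY6⟩⟩

noncomputable def stepD [Countable V] (G : SimpleGraph V) (σ : St G) : StepData G σ :=
  (step_exists G σ).some

noncomputable def seqSt [Countable V] (G : SimpleGraph V) (σ0 : St G) : ℕ → St G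
  | 0 => σ0
  | n + 1 => (stepD G (seqSt G σ0 n)).τ

end Seq

theorem main_comb {V : Type u} [Countable V] (G : SimpleGraph V)
    (hG : ¬ InSchmidtClosure Wclass.{u} G) : HasCombWithTeethIn G (Vstar G) := by
  classical
  obtain ⟨σ0⟩ := init_exists G hG
  set σ : ℕ → St G := seqSt G σ0 with hσdef
  set D : ∀ n, StepData G (σ n) := fun n => stepD G (σ n) with hDdef
  have hXmono : ∀ m n, m ≤ n → (σ n).X ⊆ (σ m).X := by
    intro m n h
    induction n with
    | zero => rw [Nat.le_zero.mp h]
    | succ n ih =>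
      rcases Nat.lt_succ_iff_lt_or_eq.mp (Nat.lt_succ_of_le h) with h' | rfl
      · exact ((D n).hsub : (σ (n+1)).X ⊆ (σ n).X).trans (ih (Nat.lt_succ_iff.mp h'))
      · exact subset_rfl
  set len : ℕ → ℕ := fun n => ((D n).W).length with hlendef
  have hlenpos : ∀ n, 0 < len n := fun n => Nat.lt_of_le_of_lt (Nat.zero_le _) (D n).hi
  set o : ℕ → ℕ := fun n => ∑ m ∈ Finset.range n, len m with hodef
  have hosucc : ∀ n, o (n+1) = o n + len n := fun n => Finset.sum_range_succ _ _
  have hoge : ∀ n, n ≤ o n := by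
    intro n
    induction n with
    | zero => exact Nat.zero_le _
    | succ n ih => rw [hosucc n]; have := hlenpos n; omega
  have homole : ∀ m n, m ≤ n → o m ≤ o n := by
    intro m n h
    induction n with
    | zero => rw [Nat.le_zero.mp h]
    | succ n ih =>
      rcases Nat.lt_succ_iff_lt_or_eq.mp (Nat.lt_succ_of_le h) with h' | rfl
      · rw [hosucc n]; have := ih (Nat.lt_succ_iff.mp h'); omega
      · exact le_rfl
  set segOf : ℕ → ℕ := fun j => Nat.findGreatest (fun n => o n ≤ j) j with hsegdef
  have ho0 : o 0 = 0 := rfl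
  have hseg1 : ∀ j, o (segOf j) ≤ j := by
    intro j
    exact Nat.findGreatest_spec (P := fun n => o n ≤ j) (Nat.zero_le j)
      (show o 0 ≤ j from ho0.le.trans (Nat.zero_le j))
  have hseg2 : ∀ j, j < o (segOf j + 1) := by
    intro j
    by_contra h
    push_neg at h
    have h2 : segOf j + 1 ≤ j := le_trans (hoge _) h
    exact Nat.findGreatest_is_greatest (P := fun n => o n ≤ j) (Nat.lt_succ_self _) h2 h
  have hseguniq : ∀ j m, o m ≤ j → j < o (m+1) → segOf j = m := by
    intro j m h1 h2
    refine le_antisymm ?_ (Nat.le_findGreatest (le_trans (hoge m) h1) h1)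
    by_contra h
    push_neg at h
    have : o (m+1) ≤ o (segOf j) := homole _ _ h
    have := hseg1 j
    omega
  set r : ℕ → V := fun j => ((D (segOf j)).W).getVert (j - o (segOf j)) with hrdef
  have hrseg : ∀ m j, o m ≤ j → j < o (m+1) → r j = ((D m).W).getVert (j - o m) := by
    intro m j h1 h2
    rw [hrdef]
    dsimp only
    rw [hseguniq j m h1 h2]
  have hrlt : ∀ j, j - o (segOf j) < len (segOf j) := by
    intro j
    have h1 := hseg1 j
    have h2 := hseg2 j
    have h3 := hosucc (segOf j)
    have e1 : len (segOf j) = ((D (segOf j)).W).length := rfl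
    omega
  have hrmem : ∀ j, r j ∈ ((D (segOf j)).W).support := by
    intro j
    rw [SimpleGraph.Walk.mem_support_iff_exists_getVert]
    exact ⟨j - o (segOf j), rfl, le_of_lt (hrlt j)⟩
  have hinj_seg : ∀ m a b, a ≤ len m → b ≤ len m →
      ((D m).W).getVert a = ((D m).W).getVert b → a = b := by
    intro m a b ha hb hab
    exact IsPath.getVert_injOn' (D m).hWp a ha b hb hab
  have hend : ∀ m, ((D m).W).getVert (len m) = (σ (m+1)).x := by
    intro m
    exact SimpleGraph.Walk.getVert_length _
  have hstart : ∀ m, ((D m).W).getVert 0 = (σ m).x := fun m =>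
    SimpleGraph.Walk.getVert_zero _
  have hne_end : ∀ j, r j ≠ (σ (segOf j + 1)).x := by
    intro j h
    have h2 : ((D (segOf j)).W).getVert (j - o (segOf j)) =
        ((D (segOf j)).W).getVert (len (segOf j)) := by
      rw [hend]
      exact h
    have := hinj_seg (segOf j) _ _ (le_of_lt (hrlt j)) le_rfl h2
    have := hrlt j
    omega
  have hXW : ∀ n z, z ∈ ((D n).W).support → z ∈ (σ n).X := fun n => (D n).hWX
  -- injectivity
  have hauxlt : ∀ a b, segOf a < segOf b → r a ≠ r b := by
    intro a b h hx
    have h2 : r b ∈ (σ (segOf a + 1)).X :=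
      hXmono _ _ h (hXW _ _ (hrmem b))
    rw [← hx] at h2
    have h3 : r a = (σ (segOf a + 1)).x :=
      (D (segOf a)).hWY (r a) (hrmem a) h2
    exact hne_end a h3
  have hinj : Function.Injective r := by
    intro a b hab
    rcases lt_trichotomy (segOf a) (segOf b) with h | h | h
    · exact absurd hab (hauxlt a b h)
    · have ha := hrseg (segOf a) a (hseg1 a) (hseg2 a)
      have hb := hrseg (segOf a) b (h ▸ hseg1 b) (h ▸ hseg2 b)
      rw [ha, hb] at hab
      have h1 := hrlt a
      have h2 := hrlt b
      rw [← h] at h2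
      have := hinj_seg (segOf a) _ _ (le_of_lt h1) (le_of_lt h2) hab
      have h3 := hseg1 a
      have h4 := hseg1 b
      rw [← h] at h4
      omega
    · exact absurd hab.symm (hauxlt b a h)
  -- adjacency
  have hadj : ∀ j, G.Adj (r j) (r (j + 1)) := by
    intro j
    have h1 := hseg1 j
    have h2 := hseg2 j
    have h3 := hosucc (segOf j)
    rcases Nat.lt_or_ge (j+1) (o (segOf j + 1)) with hlt | hge
    · rw [hrseg (segOf j) j h1 h2, hrseg (segOf j) (j+1) (by omega) hlt]
      have h4 : j + 1 - o (segOf j) = (j - o (segOf j)) + 1 := by omega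
      rw [h4]
      exact SimpleGraph.Walk.adj_getVert_succ _
        (by have := hrlt j; have e1 : len (segOf j) = ((D (segOf j)).W).length := rfl; omega)
    · have heq : j + 1 = o (segOf j + 1) := by omega
      have h5 : r (j+1) = ((D (segOf j + 1)).W).getVert 0 := by
        rw [hrseg (segOf j + 1) (j+1) (by omega)
          (by rw [hosucc (segOf j + 1)]; have := hlenpos (segOf j + 1); omega)]
        congr 1
        omega
      rw [hrseg (segOf j) j h1 h2, h5, hstart (segOf j + 1), ← hend (segOf j)]
      have h6 : len (segOf j) = (j - o (segOf j)) + 1 := by omega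
      rw [h6]
      exact SimpleGraph.Walk.adj_getVert_succ _
        (by have e1 : len (segOf j) = ((D (segOf j)).W).length := rfl; omega)
  set k : ℕ → ℕ := fun n => o n + (D n).i with hkdef
  have hkr : ∀ n, r (k n) = ((D n).W).getVert ((D n).i) := by
    intro n
    have h1 : o n ≤ k n := Nat.le_add_right _ _
    have h2 : k n < o (n+1) := by
      rw [hosucc n]
      have h3 := (D n).hi
      have e1 : len n = ((D n).W).length := rfl
      have e2 : k n = o n + (D n).i := rfl
      omega
    rw [hrseg n (k n) h1 h2]
    congr 1
    have e2 : k n = o n + (D n).i := rfl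
    omega
  have hkmono : StrictMono k := by
    apply strictMono_nat_of_lt_succ
    intro n
    have h1 := (D n).hi
    have h2 := hosucc n
    have e1 : len n = ((D n).W).length := rfl
    have e2 : k n = o n + (D n).i := rfl
    have e3 : k (n+1) = o (n+1) + (D (n+1)).i := rfl
    omega
  set t : ℕ → V := fun n => (D n).v with htdef
  set p : ∀ n, G.Walk (r (k n)) (t n) := fun n => ((D n).q).copy (hkr n).symm rfl with hpdef
  have hpsupp : ∀ n, (p n).support = ((D n).q).support := by
    intro n
    rw [hpdef]
    simp only []
    rw [SimpleGraph.Walk.support_copy]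
  have hqin : ∀ n z, z ∈ ((D n).q).support → z ∈ (σ n).X ∧ z ∉ (σ (n+1)).X := fun n =>
    (D n).hqder
  refine ⟨r, k, t, p, hinj, hadj, hkmono, fun n => (D n).hv, ?_, ?_, ?_⟩
  · intro n
    rw [hpdef]
    simp only []
    rw [SimpleGraph.Walk.isPath_copy]
    exact (D n).hq
  · intro m n hmn z hzm hzn
    rw [hpsupp] at hzm hzn
    have h1 := hqin m z hzm
    have h2 := hqin n z hzn
    rcases hmn.lt_or_gt with h | h
    · exact h1.2 (hXmono (m+1) n h h2.1)
    · exact h2.2 (hXmono (n+1) m h h1.1)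
  · intro n z hz hrj
    obtain ⟨j, rfl⟩ := hrj
    rw [hpsupp] at hz
    have hzW : r j ∈ ((D (segOf j)).W).support := hrmem j
    rcases lt_trichotomy (segOf j) n with h | h | h
    · -- past segment
      have hzXn : r j ∈ (σ n).X := (hqin n _ hz).1
      have hzX : r j ∈ (σ (segOf j + 1)).X := hXmono _ _ h hzXn
      have hzx : r j = (σ (segOf j + 1)).x := (D (segOf j)).hWY _ hzW hzX
      exact absurd hzx (hne_end j)
    · -- same segment
      subst h
      have h5 := (D (segOf j)).hqW (r j) hz hzW
      rw [hkr]
      exact h5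
    · -- future segment
      have : r j ∈ (σ (n+1)).X := hXmono _ _ h (hXW _ _ hzW)
      exact absurd this (hqin n _ hz).2

/-- If a countable graph does not lie in the Schmidt closure of 𝒲, then it contains a comb
with all its teeth in `V*(G)`. -/
theorem not_inSchmidtClosure_Wclass_hasComb {V : Type u} [Countable V] (G : SimpleGraph V)
    (hG : ¬ InSchmidtClosure Wclass.{u} G) : HasCombWithTeethIn G (Vstar G) := by
  exact main_comb G hG
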